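/- Let A be the 8×16 real matrix whose eight rows, acting on w = (w_0,…,w_15) ∈ ℝ^16, compute w_1+w_15−w_7−w_9, w_2+w_4−w_4−w_6, w_10+w_12−w_12−w_14, w_0+w_10−w_0−w_9, w_3+w_6−w_7−w_13, w_3+w_5−w_11−w_13, w_2+w_5−w_1−w_11, and w_8+w_14−w_8−w_15. Then A has full row rank 8, A𝟙 = 0 for the all-ones vector 𝟙, and for every b ∈ ℝ^8 there exists w ∈ ℝ^16 with A w = b and w_i ≥ 0 for all i. -/

import Mathlib

/-- The length-equalization system matrix for the genus-2 (5-corner region) cutgraph pattern. -/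
def Amat : Matrix (Fin 8) (Fin 16) ℝ :=
  Matrix.of ![![0,1,0,0,0,0,0,-1,0,-1,0,0,0,0,0,1],
    ![0,0,1,0,0,0,-1,0,0,0,0,0,0,0,0,0],
    ![0,0,0,0,0,0,0,0,0,0,1,0,0,0,-1,0],
    ![0,0,0,0,0,0,0,0,0,-1,1,0,0,0,0,0],
    ![0,0,0,1,0,0,1,-1,0,0,0,0,0,-1,0,0],
    ![0,0,0,1,0,1,0,0,0,0,0,-1,0,-1,0,0],
    ![0,-1,1,0,0,1,0,0,0,0,0,-1,0,0,0,0],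
    ![0,0,0,0,0,0,0,0,0,0,0,0,0,0,1,-1]]

/-- An explicit non-negative solution of `Amat.mulVec w = b`:
a particular solution shifted by a large multiple of the all-ones kernel vector. -/
noncomputable def wvec (b : Fin 8 → ℝ) : Fin 16 → ℝ :=
  let c : ℝ := |b 0| + |b 1| + |b 2| + |b 3| + |b 4| + |b 5| + |b 6| + |b 7|
  let s : ℝ := (b 0 - b 1 + b 2 - b 3 + b 4 - b 5 + b 6 + b 7) / 2
  ![c, b 0 + b 2 - b 3 + b 7 + c, b 1 + s + c, b 4 - s + c, c, c, s + c, c,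
    c, b 2 - b 3 + b 7 + c, b 2 + b 7 + c, b 4 - b 5 - s + c, c, c, b 7 + c, c]

set_option maxHeartbeats 1000000 in
lemma wvec_solves (b : Fin 8 → ℝ) : Amat.mulVec (wvec b) = b := by
  have hb : ![b 0, b 1, b 2, b 3, b 4, b 5, b 6, b 7] = b := by
    funext i; fin_cases i <;> rfl
  refine Eq.trans ?_ hb
  simp only [Amat, wvec, Matrix.cons_mulVec, Matrix.empty_mulVec, Matrix.cons_dotProduct,
    Matrix.dotProduct_of_isEmpty, Matrix.head_cons, Matrix.tail_cons]
  simp only [Matrix.vecCons, Fin.cons_inj]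
  refine ⟨by ring, by ring, by ring, by ring, by ring, by ring, by ring, by ring, trivial⟩

set_option maxHeartbeats 1000000 in
lemma wvec_nonneg (b : Fin 8 → ℝ) : ∀ i, 0 ≤ wvec b i := by
  have h : ∀ k : Fin 8, -|b k| ≤ b k ∧ b k ≤ |b k| := fun k => ⟨neg_abs_le _, le_abs_self _⟩
  intro i
  fin_cases i <;>
    · simp only [wvec]
      norm_num
      linarith [(h 0).1, (h 0).2, (h 1).1, (h 1).2, (h 2).1, (h 2).2,
        (h 3).1, (h 3).2, (h 4).1, (h 4).2, (h 5).1, (h 5).2, (h 6).1, (h 6).2,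
        (h 7).1, (h 7).2]

set_option maxHeartbeats 1000000 in
/-- The matrix has full row rank 8, the all-ones vector lies in its kernel, and
the system `A w = b` has a non-negative solution for every right-hand side `b`. -/
theorem equalizable :
    Amat.rank = 8 ∧ Amat.mulVec (fun _ => 1) = 0 ∧
    ∀ b : Fin 8 → ℝ, ∃ w : Fin 16 → ℝ, Amat.mulVec w = b ∧ ∀ i, 0 ≤ w i := by
  refine ⟨?_, ?_, fun b => ⟨wvec b, wvec_solves b, wvec_nonneg b⟩⟩
  · have hsurj : Function.Surjective Amat.mulVecLin := fun b => ⟨wvec b, wvec_solves b⟩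
    rw [Matrix.rank, LinearMap.range_eq_top.mpr hsurj, finrank_top,
      Module.finrank_fintype_fun_eq_card]
    simp
  · funext i
    fin_cases i <;>
      · simp only [Amat, Matrix.mulVec, dotProduct, Fin.sum_univ_succ, Fin.sum_univ_zero,
          Matrix.cons_val_succ, Matrix.cons_val_zero, Matrix.of_apply, Matrix.cons_val',
          Matrix.cons_val_fin_one, Matrix.empty_val', Matrix.cons_val_one, Matrix.head_cons,
          Matrix.head_fin_const, Pi.zero_apply]
        norm_num
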